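/- arXiv:1509.03608 — 6 statements merged into one kernel-verified Lean document; each statement's English description precedes it below -/
import Mathlib

section
/- Fix d ≥ 1 and let g ∈ SL(d+1, ℂ). Then g fixes the hyperplane H pointwise if and only if there exist t ∈ ℂˣ and s : Fin d → ℂ such that: g 0 0 = (t⁻¹)^d, g 0 (Fin.succ j) = 0 for all j : Fin d, g (Fin.succ i) 0 = s i for all i : Fin d, and g (Fin.succ i) (Fin.succ j) equals t if i = j and 0 otherwise. -/
/-- An element `g ∈ SL(d+1, ℂ)` fixes the hyperplane `H = {v₀ = 0}` pointwise
(projectively) if and only if it is a lower block-triangular matrix with top-left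
entry `t⁻ᵈ`, zero remaining first row, first column below given by `s : Fin d → ℂ`,
and the scalar matrix `t·Id` in the remaining `d × d` block. -/
theorem fixesHyperplane_iff_matrix_form (d : ℕ) (hd : 1 ≤ d)
    (g : Matrix.SpecialLinearGroup (Fin (d + 1)) ℂ) :
    (∀ v : Fin (d + 1) → ℂ, v 0 = 0 →
        ∃ c : ℂ, (g : Matrix (Fin (d + 1)) (Fin (d + 1)) ℂ).mulVec v = c • v) ↔
      ∃ (t : ℂˣ) (s : Fin d → ℂ),
        (g : Matrix (Fin (d + 1)) (Fin (d + 1)) ℂ) 0 0 = ((t⁻¹ : ℂˣ) : ℂ) ^ d ∧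
        (∀ j : Fin d, (g : Matrix (Fin (d + 1)) (Fin (d + 1)) ℂ) 0 j.succ = 0) ∧
        (∀ i : Fin d, (g : Matrix (Fin (d + 1)) (Fin (d + 1)) ℂ) i.succ 0 = s i) ∧
        (∀ i j : Fin d, (g : Matrix (Fin (d + 1)) (Fin (d + 1)) ℂ) i.succ j.succ =
          if i = j then (t : ℂ) else 0) := by
  set M : Matrix (Fin (d + 1)) (Fin (d + 1)) ℂ := (g : Matrix (Fin (d + 1)) (Fin (d + 1)) ℂ)
    with hM
  have hdet : M.det = 1 := g.2
  constructor
  · intro h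
    -- each column j.succ is a multiple of e_{j.succ}
    have hcol : ∀ j : Fin d, ∀ i : Fin (d + 1),
        M i j.succ = if i = j.succ then M j.succ j.succ else 0 := by
      intro j i
      obtain ⟨c, hc⟩ := h (Pi.single j.succ 1) (by
        simp [Pi.single_apply, (Fin.succ_ne_zero j).symm])
      rw [Matrix.mulVec_single] at hc
      have h1 := congrFun hc i
      have h2 := congrFun hc j.succ
      simp only [Pi.smul_apply, Pi.single_apply, smul_eq_mul] at h1 h2
      have hc' : c = M j.succ j.succ := by simpa using h2.symm
      rw [hc'] at h1
      simpa [mul_ite] using h1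
    -- all diagonal entries below are equal
    have hdiag : ∀ i j : Fin d, M i.succ i.succ = M j.succ j.succ := by
      intro i j
      by_cases hij : i = j
      · rw [hij]
      · have hne : i.succ ≠ j.succ := fun hh => hij (Fin.succ_injective d hh)
        obtain ⟨c, hc⟩ := h (Pi.single i.succ 1 + Pi.single j.succ 1) (by
          simp [Pi.single_apply, (Fin.succ_ne_zero i).symm, (Fin.succ_ne_zero j).symm])
        have hi := congrFun hc i.succ
        have hj := congrFun hc j.succ
        simp only [Matrix.mulVec_add, Matrix.mulVec_single, Pi.add_apply, Pi.smul_apply,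
          Pi.single_apply, smul_eq_mul, op_smul_eq_mul, Matrix.col_apply, mul_one] at hi hj
        rw [hcol j i.succ] at hi
        rw [hcol i j.succ] at hj
        simp [hne, hne.symm] at hi hj
        rw [hi, hj]
    obtain ⟨j0, hj0⟩ : ∃ j0 : Fin d, True := ⟨⟨0, hd⟩, trivial⟩
    set t0 : ℂ := M j0.succ j0.succ with ht0
    -- determinant computation
    have hsub : M.submatrix Fin.succ (Fin.succAbove 0) = t0 • (1 : Matrix (Fin d) (Fin d) ℂ) := by
      ext i j
      have := hcol j i.succ
      simp only [Matrix.submatrix_apply, Fin.succAbove_zero]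
      rw [hcol j i.succ]
      by_cases hij : i = j
      · simp [hij, hdiag j j0, ht0]
      · have hne : i.succ ≠ j.succ := fun hh => hij (Fin.succ_injective d hh)
        simp [hne, hij, Matrix.one_apply]
    have hdet2 : M 0 0 * t0 ^ d = 1 := by
      rw [Matrix.det_succ_row_zero] at hdet
      rw [Fin.sum_univ_succ] at hdet
      simp only [Fin.val_zero, pow_zero, one_mul] at hdet
      have hz : ∀ j : Fin d,
          (-1 : ℂ) ^ ((j.succ : Fin (d+1)) : ℕ) * M 0 j.succ *
            (M.submatrix Fin.succ (Fin.succAbove j.succ)).det = 0 := by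
        intro j
        rw [hcol j 0]
        simp [(Fin.succ_ne_zero j).symm]
      rw [Finset.sum_eq_zero (fun j _ => hz j), add_zero, hsub] at hdet
      rw [Matrix.det_smul, Matrix.det_one] at hdet
      simpa [Fintype.card_fin, smul_eq_mul] using hdet
    have ht0ne : t0 ≠ 0 := by
      intro hzero
      rw [hzero, zero_pow (by omega), mul_zero] at hdet2
      exact zero_ne_one hdet2
    refine ⟨Units.mk0 t0 ht0ne, fun i => M i.succ 0, ?_, ?_, ?_, ?_⟩
    · have h00 : M 0 0 = (t0 ^ d)⁻¹ := eq_inv_of_mul_eq_one_left hdet2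
      rw [h00]
      simp [Units.val_mk0, inv_pow]
    · intro j
      rw [hcol j 0]
      simp [(Fin.succ_ne_zero j).symm]
    · intro i; rfl
    · intro i j
      rw [hcol j i.succ]
      by_cases hij : i = j
      · simp [hij, Units.val_mk0, hdiag j j0, ht0]
      · have hne : i.succ ≠ j.succ := fun hh => hij (Fin.succ_injective d hh)
        simp [hne, hij]
  · rintro ⟨t, s, h1, h2, h3, h4⟩ v hv
    refine ⟨(t : ℂ), ?_⟩
    funext i
    induction i using Fin.cases with
    | zero =>
        simp only [Matrix.mulVec, dotProduct, Pi.smul_apply, smul_eq_mul, hv, mul_zero]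
        rw [Fin.sum_univ_succ]
        rw [hv, mul_zero, zero_add]
        exact Finset.sum_eq_zero fun j _ => by rw [h2 j, zero_mul]
    | succ i =>
        simp only [Matrix.mulVec, dotProduct, Pi.smul_apply, smul_eq_mul]
        rw [Fin.sum_univ_succ, hv, mul_zero, zero_add]
        rw [Finset.sum_congr rfl (fun j _ => by rw [h4 i j])]
        simp [Finset.sum_ite_eq, ite_mul]
end

section
/- Fix d ≥ 1 and let G be the subgroup { g ∈ SL(d+1, ℂ) : g fixes the hyperplane H pointwise } of SL(d+1, ℂ). Then G is isomorphic as a group to the semidirect product of the additive group ℂ^d = (Fin d → ℂ) by the multiplicative group ℂˣ, where t ∈ ℂˣ acts on the additive group ℂ^d by the automorphism s ↦ t^(d+1) • s. (In particular G ≅ 𝔾_m ⋉ 𝔾_a^d.) -/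
/-- The action of `ℂˣ` on the additive group `ℂᵈ` where `t` acts as
multiplication by `t^(d+1)`, packaged as a homomorphism into the automorphism
group of `Multiplicative (Fin d → ℂ)`. -/
noncomputable def homothetyTranslationAction (d : ℕ) :
    ℂˣ →* MulAut (Multiplicative (Fin d → ℂ)) where
  toFun t := AddEquiv.toMultiplicative (DistribMulAction.toAddAut ℂˣ (Fin d → ℂ) (t ^ (d + 1)))
  map_one' := by
    ext x
    simp [AddEquiv.toMultiplicative]
  map_mul' t u := by
    ext x
    simp [AddEquiv.toMultiplicative, mul_pow, mul_smul]

namespace FixHyp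

open Matrix

/-- The matrix with `t⁻¹^d` in the top-left corner, `t⁻¹^d • s` below it,
`t` on the rest of the diagonal, zeros elsewhere. -/
noncomputable def mat (d : ℕ) (s : Fin d → ℂ) (t : ℂˣ) :
    Matrix (Fin (d + 1)) (Fin (d + 1)) ℂ :=
  Fin.cons (Fin.cons (((t : ℂ))⁻¹ ^ d) 0)
    (fun i => Fin.cons (((t : ℂ))⁻¹ ^ d * s i) ((t : ℂ) • (Pi.single i 1 : Fin d → ℂ)))

@[simp] lemma mat_zero_zero (d : ℕ) (s : Fin d → ℂ) (t : ℂˣ) :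
    mat d s t 0 0 = ((t : ℂ))⁻¹ ^ d := rfl

@[simp] lemma mat_zero_succ (d : ℕ) (s : Fin d → ℂ) (t : ℂˣ) (j : Fin d) :
    mat d s t 0 j.succ = 0 := by simp [mat]

@[simp] lemma mat_succ_zero (d : ℕ) (s : Fin d → ℂ) (t : ℂˣ) (i : Fin d) :
    mat d s t i.succ 0 = ((t : ℂ))⁻¹ ^ d * s i := by simp [mat]

@[simp] lemma mat_succ_succ (d : ℕ) (s : Fin d → ℂ) (t : ℂˣ) (i j : Fin d) :
    mat d s t i.succ j.succ = (t : ℂ) * (if j = i then 1 else 0) := by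
  simp [mat, Pi.single_apply]

lemma mat_blockTriangular (d : ℕ) (s : Fin d → ℂ) (t : ℂˣ) :
    (mat d s t).BlockTriangular OrderDual.toDual := by
  intro i j h
  have hij : i < j := h
  induction j using Fin.cases with
  | zero => exact absurd hij (Fin.not_lt_zero i)
  | succ j =>
    induction i using Fin.cases with
    | zero => simp
    | succ i =>
      have : i ≠ j := by
        intro hh; subst hh; exact lt_irrefl _ hij
      simp [Ne.symm this]

lemma mat_det (d : ℕ) (s : Fin d → ℂ) (t : ℂˣ) : (mat d s t).det = 1 := by
  rw [Matrix.det_of_lowerTriangular _ (mat_blockTriangular d s t), Fin.prod_univ_succ]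
  simp [inv_pow]

lemma mat_mul (d : ℕ) (s s' : Fin d → ℂ) (t t' : ℂˣ) :
    mat d s t * mat d s' t' = mat d (s + ((t : ℂ) ^ (d + 1)) • s') (t * t') := by
  have ht : (t : ℂ) ≠ 0 := t.ne_zero
  have ht' : (t' : ℂ) ≠ 0 := t'.ne_zero
  ext i j
  rw [Matrix.mul_apply]
  induction i using Fin.cases with
  | zero =>
    induction j using Fin.cases with
    | zero =>
      simp [Fin.sum_univ_succ, mul_pow, mul_inv]
      ring
    | succ j => simp [Fin.sum_univ_succ]
  | succ i =>
    induction j using Fin.cases with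
    | zero =>
      simp only [Fin.sum_univ_succ, mat_succ_zero, mat_zero_zero, mat_succ_succ,
        Pi.add_apply, Pi.smul_apply, smul_eq_mul]
      rw [Finset.sum_eq_single i]
      · simp only [if_pos rfl, ↓reduceIte, Units.val_mul, inv_pow]
        field_simp
        ring
      · intro b _ hb
        simp [hb]
      · simp
    | succ j =>
      simp only [Fin.sum_univ_succ, mat_succ_zero, mat_zero_succ, mat_succ_succ, mul_zero]
      rw [Finset.sum_eq_single i]
      · simp
      · intro b _ hb
        simp [hb]
      · simp

lemma mat_one (d : ℕ) : mat d 0 1 = 1 := by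
  ext i j
  induction i using Fin.cases with
  | zero =>
    induction j using Fin.cases with
    | zero => simp [Matrix.one_apply]
    | succ j => simp [Matrix.one_apply, (Fin.succ_ne_zero j).symm]
  | succ i =>
    induction j using Fin.cases with
    | zero => simp [Matrix.one_apply, Fin.succ_ne_zero i]
    | succ j =>
      by_cases h : j = i
      · subst h; simp [Matrix.one_apply]
      · simp [Matrix.one_apply, h, (Fin.succ_injective d).ne (Ne.symm h)]

lemma mat_mulVec (d : ℕ) (s : Fin d → ℂ) (t : ℂˣ) (v : Fin (d + 1) → ℂ) (hv : v 0 = 0) :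
    (mat d s t).mulVec v = (t : ℂ) • v := by
  ext k
  rw [Matrix.mulVec, dotProduct]
  induction k using Fin.cases with
  | zero => simp [Fin.sum_univ_succ, hv]
  | succ i =>
    simp only [Fin.sum_univ_succ, mat_succ_zero, mat_succ_succ, hv, mul_zero, zero_add]
    rw [Finset.sum_eq_single i]
    · simp
    · intro b _ hb
      simp [hb]
    · simp

lemma action_toAdd (d : ℕ) (t : ℂˣ) (m : Multiplicative (Fin d → ℂ)) :
    Multiplicative.toAdd (homothetyTranslationAction d t m)
      = ((t : ℂ) ^ (d + 1)) • Multiplicative.toAdd m := by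
  simp [homothetyTranslationAction, AddEquiv.toMultiplicative,
    Units.smul_def]

/-- The homomorphism from the semidirect product into `SL(d+1, ℂ)`. -/
noncomputable def F (d : ℕ) :
    (Multiplicative (Fin d → ℂ) ⋊[homothetyTranslationAction d] ℂˣ) →*
      Matrix.SpecialLinearGroup (Fin (d + 1)) ℂ where
  toFun x := ⟨mat d (Multiplicative.toAdd x.left) x.right, mat_det _ _ _⟩
  map_one' := by
    apply Subtype.ext
    simpa using mat_one d
  map_mul' a b := by
    apply Subtype.ext
    show mat d (Multiplicative.toAdd (a * b).left) (a * b).right = _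
    rw [SemidirectProduct.mul_left, SemidirectProduct.mul_right, toAdd_mul, action_toAdd,
      ← mat_mul]
    rfl

end FixHyp

/-- The subgroup `G ⊆ SL(d+1, ℂ)` of elements fixing the hyperplane `H = {v₀ = 0}`
pointwise is isomorphic, as a group, to the semidirect product
`𝔾ₐᵈ ⋊ 𝔾ₘ = (Fin d → ℂ) ⋊ ℂˣ`, where `t ∈ ℂˣ` acts by `s ↦ t^(d+1) • s`:
there is an injective group homomorphism from the semidirect product to
`SL(d+1, ℂ)` whose range is exactly `G`. -/
theorem fixesHyperplane_iso_semidirectProduct (d : ℕ) (hd : 1 ≤ d) :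
    ∃ f : (Multiplicative (Fin d → ℂ) ⋊[homothetyTranslationAction d] ℂˣ) →*
        Matrix.SpecialLinearGroup (Fin (d + 1)) ℂ,
      Function.Injective f ∧
      Set.range f =
        { g : Matrix.SpecialLinearGroup (Fin (d + 1)) ℂ |
            ∀ v : Fin (d + 1) → ℂ, v 0 = 0 →
              ∃ c : ℂ, (g : Matrix (Fin (d + 1)) (Fin (d + 1)) ℂ).mulVec v = c • v } := by
  classical
  refine ⟨FixHyp.F d, ?_, ?_⟩
  · rw [injective_iff_map_eq_one]
    intro x hx
    have hmat : FixHyp.mat d (Multiplicative.toAdd x.left) x.right = 1 :=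
      congrArg Subtype.val hx
    set i0 : Fin d := ⟨0, hd⟩
    have ht : (x.right : ℂ) = 1 := by
      have := congrFun (congrFun hmat i0.succ) i0.succ
      simpa [Matrix.one_apply] using this
    have htu : x.right = 1 := Units.ext ht
    have hs : Multiplicative.toAdd x.left = 0 := by
      funext i
      have := congrFun (congrFun hmat i.succ) 0
      simpa [Matrix.one_apply, Fin.succ_ne_zero i, ht] using this
    have hl : x.left = 1 := by
      have := congrArg Multiplicative.ofAdd hs
      simpa using this
    ext <;> simp [hl, htu]
  · ext g
    constructor
    · rintro ⟨x, rfl⟩ v hv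
      exact ⟨(x.right : ℂ), FixHyp.mat_mulVec d _ _ v hv⟩
    · intro hg
      set A : Matrix (Fin (d + 1)) (Fin (d + 1)) ℂ := ↑g with hA
      have key : ∀ j : Fin d, ∃ c : ℂ, ∀ k, A k j.succ = c * (Pi.single j.succ 1 : Fin (d + 1) → ℂ) k := by
        intro j
        obtain ⟨c, hc⟩ := hg (Pi.single j.succ 1)
          (by simp [Pi.single_apply, (Fin.succ_ne_zero j).symm])
        refine ⟨c, fun k => ?_⟩
        have := congrFun hc k
        simpa using this
      choose c hc using key
      have hA' : (↑g : Matrix (Fin (d + 1)) (Fin (d + 1)) ℂ) = A := rfl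
      have hcc : ∀ i j : Fin d, c i = c j := by
        intro i j
        rcases eq_or_ne i j with h | h
        · rw [h]
        · obtain ⟨c', hc'⟩ := hg (Pi.single i.succ 1 + Pi.single j.succ 1)
            (by simp [Pi.single_apply, (Fin.succ_ne_zero i).symm, (Fin.succ_ne_zero j).symm])
          have hij : i.succ ≠ j.succ := (Fin.succ_injective d).ne h
          have h1 : c i = c' := by
            have := congrFun hc' i.succ
            simp only [Matrix.mulVec_add, Matrix.mulVec_single, mul_one, Pi.add_apply,
              Pi.smul_apply, smul_eq_mul, MulOpposite.op_one, one_smul, Matrix.col_apply] at this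
            rw [hA', hc i i.succ, hc j i.succ] at this
            simpa [Pi.single_apply, hij, Ne.symm hij] using this
          have h2 : c j = c' := by
            have := congrFun hc' j.succ
            simp only [Matrix.mulVec_add, Matrix.mulVec_single, mul_one, Pi.add_apply,
              Pi.smul_apply, smul_eq_mul, MulOpposite.op_one, one_smul, Matrix.col_apply] at this
            rw [hA', hc i j.succ, hc j j.succ] at this
            simpa [Pi.single_apply, hij, Ne.symm hij] using this
          rw [h1, h2]
      set i0 : Fin d := ⟨0, hd⟩
      set c0 : ℂ := c i0 with hc0def
      have htri : A.BlockTriangular OrderDual.toDual := by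
        intro i j hlt
        have hij : i < j := hlt
        induction j using Fin.cases with
        | zero => exact absurd hij (Fin.not_lt_zero i)
        | succ j =>
          have hne : i ≠ j.succ := ne_of_lt hij
          rw [hc j i]
          simp [Pi.single_apply, hne]
      have hdiag : ∀ i : Fin d, A i.succ i.succ = c0 := by
        intro i
        rw [hc i i.succ, hcc i i0]
        simp [hc0def]
      have hdet : A 0 0 * c0 ^ d = 1 := by
        have h1 : A.det = 1 := g.property
        rw [Matrix.det_of_lowerTriangular _ htri, Fin.prod_univ_succ] at h1
        rw [← h1]
        congr 1
        rw [Finset.prod_congr rfl fun i _ => hdiag i, Finset.prod_const,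
          Finset.card_univ, Fintype.card_fin]
      have hc0 : c0 ≠ 0 := by
        intro h
        rw [h, zero_pow (by omega : d ≠ 0), mul_zero] at hdet
        exact zero_ne_one hdet
      refine ⟨⟨Multiplicative.ofAdd (fun i => A i.succ 0 * c0 ^ d), Units.mk0 c0 hc0⟩, ?_⟩
      apply Subtype.ext
      show FixHyp.mat d _ _ = A
      ext k l
      induction k using Fin.cases with
      | zero =>
        induction l using Fin.cases with
        | zero =>
          show ((Units.mk0 c0 hc0 : ℂ))⁻¹ ^ d = A 0 0
          rw [Units.val_mk0, inv_pow]
          exact (eq_inv_of_mul_eq_one_left hdet).symm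
        | succ j =>
          rw [FixHyp.mat_zero_succ, hc j 0]
          simp [Pi.single_apply, (Fin.succ_ne_zero j).symm]
      | succ i =>
        induction l using Fin.cases with
        | zero =>
          rw [FixHyp.mat_succ_zero, Units.val_mk0, inv_pow]
          field_simp
          rfl
        | succ j =>
          rw [FixHyp.mat_succ_succ, Units.val_mk0, hc j i.succ]
          rcases eq_or_ne j i with h | h
          · subst h
            simpa [Pi.single_apply] using hcc i0 j
          · simp [Pi.single_apply, h, (Fin.succ_injective d).ne (Ne.symm h)]
end

section
/- Fix d ≥ 1. The set of g ∈ SL(d+1, ℂ) such that g fixes the hyperplane H pointwise and there exists c : ℂ with g.mulVec (Pi.single 0 1) = c • Pi.single 0 1 is exactly { D(t) : t ∈ ℂˣ }, where D(t) is the diagonal matrix with D(t) 0 0 = (t⁻¹)^d and D(t) i i = t for all i ≠ 0 (and zero off-diagonal entries). Moreover, t ↦ D(t) is an injective group homomorphism from ℂˣ to SL(d+1, ℂ); in particular this stabilizer is an infinite subgroup isomorphic to ℂˣ. -/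
open Matrix

private lemma prod_if (d : ℕ) (a t : ℂ) :
    (∏ i : Fin (d+1), (if i = 0 then a else t)) = a * t ^ d := by
  rw [Fin.prod_univ_succ]
  simp [Fin.succ_ne_zero]

private lemma det_Dmat (d : ℕ) (t : ℂˣ) :
    (Matrix.diagonal (fun i : Fin (d+1) =>
      if i = 0 then ((t⁻¹ : ℂˣ) : ℂ) ^ d else (t : ℂ))).det = 1 := by
  rw [Matrix.det_diagonal, prod_if]
  rw [← mul_pow, ← Units.val_mul, inv_mul_cancel, Units.val_one, one_pow]

private def Dmat (d : ℕ) (t : ℂˣ) : Matrix.SpecialLinearGroup (Fin (d+1)) ℂ :=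
  ⟨Matrix.diagonal (fun i => if i = 0 then ((t⁻¹ : ℂˣ) : ℂ) ^ d else (t : ℂ)),
    det_Dmat d t⟩

private def Dhom (d : ℕ) : ℂˣ →* Matrix.SpecialLinearGroup (Fin (d+1)) ℂ where
  toFun := Dmat d
  map_one' := by
    apply Subtype.ext
    simp [Dmat]
  map_mul' := fun s t => by
    apply Subtype.ext
    have hfun : (fun i : Fin (d+1) =>
        if i = 0 then (((s*t)⁻¹ : ℂˣ) : ℂ) ^ d else ((s*t : ℂˣ) : ℂ)) =
        fun i => (if i = 0 then ((s⁻¹ : ℂˣ) : ℂ) ^ d else (s : ℂ)) *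
          (if i = 0 then ((t⁻¹ : ℂˣ) : ℂ) ^ d else (t : ℂ)) := by
      funext i
      by_cases h : i = 0
      · simp only [h, if_pos]
        rw [mul_inv, Units.val_mul, mul_pow, mul_comm]
      · simp [h]
    simp only [Dmat, Matrix.SpecialLinearGroup.coe_mul, Matrix.diagonal_mul_diagonal, hfun]
    exact (Matrix.diagonal_mul_diagonal _ _).symm

/-- Inside the group of elements of `SL(d+1, ℂ)` fixing the hyperplane
`H = {v₀ = 0}` pointwise, the stabilizer of the point `(1 : 0 : ⋯ : 0)` off `H`
consists exactly of the diagonal matrices `D(t) = diag(t⁻ᵈ, t, …, t)` for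
`t ∈ ℂˣ`; moreover `t ↦ D(t)` is an injective group homomorphism `ℂˣ → SL(d+1, ℂ)`,
so this stabilizer is a copy of `𝔾ₘ`. -/
theorem stabilizer_of_point_is_Gm (d : ℕ) (hd : 1 ≤ d) :
    ({ g : Matrix.SpecialLinearGroup (Fin (d + 1)) ℂ |
        (∀ v : Fin (d + 1) → ℂ, v 0 = 0 →
          ∃ c : ℂ, (g : Matrix (Fin (d + 1)) (Fin (d + 1)) ℂ).mulVec v = c • v) ∧
        ∃ c : ℂ, (g : Matrix (Fin (d + 1)) (Fin (d + 1)) ℂ).mulVec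
            (Pi.single 0 1 : Fin (d + 1) → ℂ) = c • (Pi.single 0 1 : Fin (d + 1) → ℂ) } =
      { g : Matrix.SpecialLinearGroup (Fin (d + 1)) ℂ |
        ∃ t : ℂˣ, (g : Matrix (Fin (d + 1)) (Fin (d + 1)) ℂ) =
          Matrix.diagonal (fun i => if i = 0 then ((t⁻¹ : ℂˣ) : ℂ) ^ d else (t : ℂ)) }) ∧
    ∃ D : ℂˣ →* Matrix.SpecialLinearGroup (Fin (d + 1)) ℂ,
      Function.Injective D ∧
      ∀ t : ℂˣ, (D t : Matrix (Fin (d + 1)) (Fin (d + 1)) ℂ) =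
        Matrix.diagonal (fun i => if i = 0 then ((t⁻¹ : ℂˣ) : ℂ) ^ d else (t : ℂ)) := by
  have hlt : (1 : ℕ) < d + 1 := by omega
  set i1 : Fin (d+1) := ⟨1, hlt⟩ with hi1def
  have hi1 : i1 ≠ 0 := by simp [hi1def, Fin.ext_iff]
  constructor
  · ext g
    simp only [Set.mem_setOf_eq]
    constructor
    · rintro ⟨hH, c0, hc0⟩
      -- column 0
      have hcol0 : ∀ j, (g : Matrix (Fin (d+1)) (Fin (d+1)) ℂ) j 0 =
          if j = 0 then c0 else 0 := by
        intro j
        have h := congrFun hc0 j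
        simp only [Matrix.mulVec_single, mul_one, Pi.smul_apply, Pi.single_apply,
          smul_eq_mul, mul_ite, mul_one, mul_zero] at h
        simpa using h
      -- eigenvectors for i ≠ 0
      have hcolaux : ∀ i : Fin (d+1), i ≠ 0 → ∃ c : ℂ,
          (g : Matrix (Fin (d+1)) (Fin (d+1)) ℂ).mulVec (Pi.single i 1) =
            c • (Pi.single i 1 : Fin (d+1) → ℂ) := fun i hi =>
        hH (Pi.single i 1) (Pi.single_eq_of_ne (Ne.symm hi) 1)
      choose cc hcc using hcolaux
      have hcoli : ∀ (i : Fin (d+1)) (hi : i ≠ 0) (j : Fin (d+1)),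
          (g : Matrix (Fin (d+1)) (Fin (d+1)) ℂ) j i = if j = i then cc i hi else 0 := by
        intro i hi j
        have h := congrFun (hcc i hi) j
        simp only [Matrix.mulVec_single, mul_one, Pi.smul_apply, Pi.single_apply,
          smul_eq_mul, mul_ite, mul_one, mul_zero] at h
        simpa using h
      -- all eigenvalues for i ≠ 0 agree
      have heq : ∀ (i : Fin (d+1)) (hi : i ≠ 0), cc i hi = cc i1 hi1 := by
        intro i hi
        by_cases hii : i = i1
        · subst hii; rfl
        · set v : Fin (d+1) → ℂ := Pi.single i 1 + Pi.single i1 1 with hv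
          have hv0 : v 0 = 0 := by
            simp [hv, Pi.single_eq_of_ne (Ne.symm hi), Pi.single_eq_of_ne (Ne.symm hi1)]
          obtain ⟨c, hc⟩ := hH v hv0
          have hgv : (g : Matrix (Fin (d+1)) (Fin (d+1)) ℂ).mulVec v =
              cc i hi • (Pi.single i 1 : Fin (d+1) → ℂ) +
                cc i1 hi1 • (Pi.single i1 1 : Fin (d+1) → ℂ) := by
            rw [hv, Matrix.mulVec_add, hcc i hi, hcc i1 hi1]
          rw [hgv] at hc
          have h1 := congrFun hc i
          have h2 := congrFun hc i1
          simp [hv, Pi.single_eq_of_ne hii, Pi.single_eq_of_ne (Ne.symm hii)] at h1 h2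
          rw [h1, h2]
      set t0 : ℂ := cc i1 hi1 with ht0def
      have hg : (g : Matrix (Fin (d+1)) (Fin (d+1)) ℂ) =
          Matrix.diagonal (fun i => if i = 0 then c0 else t0) := by
        ext j i
        rw [Matrix.diagonal_apply]
        by_cases hi : i = 0
        · subst hi
          rw [hcol0 j]
          by_cases hj : j = 0 <;> simp [hj]
        · rw [hcoli i hi j, heq i hi]
          by_cases hji : j = i <;> simp [hji, hi]
      have hdet : c0 * t0 ^ d = 1 := by
        have h := g.2
        rw [hg, Matrix.det_diagonal, prod_if] at h
        exact h
      have ht0 : t0 ≠ 0 := by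
        intro h
        rw [h, zero_pow (by omega : d ≠ 0), mul_zero] at hdet
        exact one_ne_zero hdet.symm
      refine ⟨Units.mk0 t0 ht0, ?_⟩
      rw [hg]
      have hc0' : c0 = (t0 ^ d)⁻¹ := eq_inv_of_mul_eq_one_left hdet
      have hfun : (fun i : Fin (d+1) => if i = 0 then c0 else t0) =
          fun i => if i = 0 then (((Units.mk0 t0 ht0)⁻¹ : ℂˣ) : ℂ) ^ d
            else ((Units.mk0 t0 ht0 : ℂˣ) : ℂ) := by
        funext i
        by_cases h : i = 0 <;> simp [h, hc0', inv_pow]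
      rw [hfun]
    · rintro ⟨t, ht⟩
      refine ⟨?_, ((t⁻¹ : ℂˣ) : ℂ) ^ d, ?_⟩
      · intro v hv
        refine ⟨(t : ℂ), ?_⟩
        funext i
        rw [ht, Matrix.mulVec_diagonal]
        by_cases h : i = 0
        · subst h; simp [hv]
        · simp [h]
      · funext i
        rw [ht, Matrix.mulVec_diagonal]
        by_cases h : i = 0
        · subst h; simp
        · simp [h, Pi.single_eq_of_ne h]
  · refine ⟨Dhom d, ?_, fun t => rfl⟩
    intro s t hst
    have h2 : ((Dhom d s : Matrix (Fin (d+1)) (Fin (d+1)) ℂ)) i1 i1 =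
        ((Dhom d t : Matrix (Fin (d+1)) (Fin (d+1)) ℂ)) i1 i1 := by rw [hst]
    simp only [Dhom, Dmat, MonoidHom.coe_mk, OneHom.coe_mk,
      Matrix.diagonal_apply_eq, if_neg hi1] at h2
    exact Units.ext h2
end

section
/- Fix d ≥ 1 and n ≥ 0, and let p : Fin n → (Fin (d+1) → ℂ) be a family of nonzero vectors (representing a configuration of n points of ℙ^d). Then the stabilizer set S = { g ∈ SL(d+1, ℂ) : g fixes the hyperplane H pointwise and for every i : Fin n there exists c : ℂ with g.mulVec (p i) = c • (p i) } is finite if and only if there exist indices i, j : Fin n such that (p i) 0 ≠ 0, (p j) 0 ≠ 0, and p i, p j are not proportional (there is no a : ℂ with p j = a • p i). -/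
open Matrix

-- the family matrix used in the infinite case
private noncomputable def famM (d : ℕ) (q : Fin (d+1) → ℂ) (l : ℂ) :
    Matrix (Fin (d+1)) (Fin (d+1)) ℂ :=
  Matrix.of fun i j => l * (if i = j then 1 else 0) + (l⁻¹ ^ d - l) * q i * (if j = 0 then 1 else 0)

private lemma famM_mulVec (d : ℕ) (q : Fin (d+1) → ℂ) (l : ℂ) (v : Fin (d+1) → ℂ) :
    (famM d q l).mulVec v = fun i => l * v i + (l⁻¹ ^ d - l) * q i * v 0 := by
  funext i
  simp [famM, Matrix.mulVec, dotProduct, add_mul, Finset.sum_add_distrib,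
    ite_mul, mul_ite, Finset.mul_sum]

private lemma famM_det (d : ℕ) (q : Fin (d+1) → ℂ) (hq0 : q 0 = 1) (l : ℂ) (hl : l ≠ 0) :
    (famM d q l).det = 1 := by
  rw [Matrix.det_of_lowerTriangular]
  · have h0 : famM d q l 0 0 = l⁻¹ ^ d := by simp [famM, hq0]
    have hs : ∀ i : Fin d, famM d q l i.succ i.succ = l := by
      intro i; simp [famM, Fin.succ_ne_zero]
    rw [Fin.prod_univ_succ, h0]
    simp only [hs, Finset.prod_const, Finset.card_univ, Fintype.card_fin]
    rw [← mul_pow, inv_mul_cancel₀ hl, one_pow]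
  · intro i j hij
    have hij' : (i : Fin (d+1)) < j := hij
    have hj0 : j ≠ 0 := by
      intro h; subst h; exact absurd hij' (by simp)
    have hji : i ≠ j := ne_of_lt hij'
    simp [famM, hji, hj0]

private lemma stab_scalar (d : ℕ) (A : Matrix (Fin (d+1)) (Fin (d+1)) ℂ)
    (u v : Fin (d+1) → ℂ) (hu : u ≠ 0) (hv : v ≠ 0) (hu0 : u 0 ≠ 0) (hv0 : v 0 ≠ 0)
    (hnp : ¬ ∃ a : ℂ, v = a • u)
    (h1 : ∀ w : Fin (d+1) → ℂ, w 0 = 0 → ∃ c : ℂ, A.mulVec w = c • w)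
    (hA_u : ∃ c : ℂ, A.mulVec u = c • u) (hA_v : ∃ c : ℂ, A.mulVec v = c • v) :
    ∃ a : ℂ, A = a • 1 := by
  obtain ⟨a, hAu⟩ := hA_u
  obtain ⟨b, hAv⟩ := hA_v
  set w : Fin (d+1) → ℂ := v 0 • u - u 0 • v with hwdef
  have hw0 : w 0 = 0 := by simp [hwdef]; ring
  have hwne : w ≠ 0 := by
    intro h
    apply hnp
    refine ⟨(u 0)⁻¹ * v 0, ?_⟩
    funext k
    have hk : v 0 * u k - u 0 * v k = 0 := congrFun h k
    have := hu0
    simp only [Pi.smul_apply, smul_eq_mul]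
    rw [mul_assoc, eq_comm, inv_mul_eq_iff_eq_mul₀ hu0]
    linear_combination hk
  obtain ⟨c, hAw⟩ := h1 w hw0
  have hAw2 : ∀ k, a * (v 0 * u k) - b * (u 0 * v k) = c * (v 0 * u k - u 0 * v k) := by
    intro k
    have h2 : A.mulVec w = v 0 • A.mulVec u - u 0 • A.mulVec v := by
      rw [hwdef, Matrix.mulVec_sub, Matrix.mulVec_smul, Matrix.mulVec_smul]
    rw [hAw] at h2
    have hk := congrFun h2 k
    simp only [Pi.sub_apply, Pi.smul_apply, smul_eq_mul, hwdef, hAu, hAv] at hk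
    linear_combination -hk
  have hbc : b = c := by
    by_contra hbc
    apply hnp
    refine ⟨((b - c) * u 0)⁻¹ * ((a - c) * v 0), ?_⟩
    funext k
    have hk := hAw2 k
    have h1' : (b - c) * u 0 ≠ 0 := mul_ne_zero (sub_ne_zero.mpr hbc) hu0
    simp only [Pi.smul_apply, smul_eq_mul]
    rw [mul_assoc, eq_inv_mul_iff_mul_eq₀ h1']
    linear_combination -hk
  have hac : a = c := by
    subst hbc
    obtain ⟨k, hk⟩ := Function.ne_iff.mp hu
    have hk' : u k ≠ 0 := by simpa using hk
    have h2 : (a - b) * (v 0 * u k) = 0 := by linear_combination hAw2 k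
    rcases mul_eq_zero.mp h2 with h | h
    · exact sub_eq_zero.mp h
    · exact absurd h (mul_ne_zero hv0 hk')
  subst hac
  -- now A w = a w; show A x = a x for all x in H
  have haw : A.mulVec w = a • w := hAw
  have hall : ∀ x : Fin (d+1) → ℂ, x 0 = 0 → A.mulVec x = a • x := by
    intro x hx0
    by_cases hx : x = 0
    · simp [hx]
    obtain ⟨cx, hcx⟩ := h1 x hx0
    by_cases hxw : ∃ t : ℂ, x = t • w
    · obtain ⟨t, rfl⟩ := hxw
      rw [Matrix.mulVec_smul, haw, smul_comm]
    · obtain ⟨c', hc'⟩ := h1 (x + w) (by simp [hx0, hw0])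
      have hsum : A.mulVec (x + w) = cx • x + a • w := by
        rw [Matrix.mulVec_add, hcx, haw]
      rw [hc'] at hsum
      have key2 : ∀ k, (c' - cx) * x k = (a - c') * w k := by
        intro k
        have hk := congrFun hsum k
        simp only [Pi.add_apply, Pi.smul_apply, smul_eq_mul] at hk
        linear_combination hk
      have hac' : a = c' := by
        by_contra hne
        apply hxw
        have hs : ∀ k, w k = ((a - c')⁻¹ * (c' - cx)) * x k := by
          intro k
          rw [inv_mul_eq_div, div_mul_eq_mul_div, eq_div_iff (sub_ne_zero.mpr hne)]
          linear_combination -key2 k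
        have hsne : (a - c')⁻¹ * (c' - cx) ≠ 0 := by
          intro h0
          apply hwne
          funext k; rw [hs k, h0, zero_mul]; rfl
        refine ⟨((a - c')⁻¹ * (c' - cx))⁻¹, ?_⟩
        funext k
        simp only [Pi.smul_apply, smul_eq_mul]
        rw [hs k, ← mul_assoc, inv_mul_cancel₀ hsne, one_mul]
      have hcx' : cx = a := by
        subst hac'
        obtain ⟨k, hk⟩ := Function.ne_iff.mp hx
        have hk' : x k ≠ 0 := by simpa using hk
        have := key2 k
        simp only [sub_self, zero_mul] at this
        have := mul_eq_zero.mp this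
        rcases this with h | h
        · exact (sub_eq_zero.mp h).symm
        · exact absurd h hk'
      rw [hcx, hcx']
  -- columns: A = a • 1
  have hcol : ∀ j : Fin (d+1), A.mulVec (Pi.single j 1) = a • (Pi.single j 1 : Fin (d+1) → ℂ) := by
    intro j
    by_cases hj : j = 0
    · subst hj
      set e0 : Fin (d+1) → ℂ := Pi.single 0 1 with he0
      set xu : Fin (d+1) → ℂ := u - u 0 • e0 with hxu
      have hxu0 : xu 0 = 0 := by simp [hxu, he0]
      have hAxu : A.mulVec xu = a • xu := hall xu hxu0
      have h5 : u = u 0 • e0 + xu := by rw [hxu]; abel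
      have h2 := congrArg A.mulVec h5
      rw [Matrix.mulVec_add, Matrix.mulVec_smul, hAxu, hAu] at h2
      funext k
      have hk2 := congrFun h2 k
      have hk3 := congrFun h5 k
      simp only [Pi.add_apply, Pi.smul_apply, smul_eq_mul] at hk2 hk3 ⊢
      have h6 : u 0 * (A.mulVec e0 k) = u 0 * (a * e0 k) := by
        linear_combination a * hk3 - hk2
      exact mul_left_cancel₀ hu0 h6
    · exact hall (Pi.single j 1) (Pi.single_eq_of_ne (Ne.symm hj) 1)
  refine ⟨a, ?_⟩
  ext i j
  have hk := congrFun (hcol j) i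
  simp only [Matrix.mulVec_single, Pi.smul_apply, smul_eq_mul, op_smul_eq_mul, Matrix.col_apply, mul_one] at hk
  rw [hk]
  simp [Pi.single_apply, Matrix.one_apply, eq_comm]

/-- For a configuration `p` of `n` nonzero vectors in `ℂ^(d+1)` (points of `ℙᵈ`),
the stabilizer of `p` inside the group of elements of `SL(d+1, ℂ)` fixing the
hyperplane `H = {v₀ = 0}` pointwise is finite if and only if the configuration
contains two non-proportional points off `H`. -/
theorem stabilizer_finite_iff_two_points_off_H (d n : ℕ) (hd : 1 ≤ d)
    (p : Fin n → (Fin (d + 1) → ℂ)) (hp : ∀ i, p i ≠ 0) :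
    ({ g : Matrix.SpecialLinearGroup (Fin (d + 1)) ℂ |
        (∀ v : Fin (d + 1) → ℂ, v 0 = 0 →
          ∃ c : ℂ, (g : Matrix (Fin (d + 1)) (Fin (d + 1)) ℂ).mulVec v = c • v) ∧
        ∀ i : Fin n, ∃ c : ℂ,
          (g : Matrix (Fin (d + 1)) (Fin (d + 1)) ℂ).mulVec (p i) = c • (p i) }).Finite ↔
      ∃ i j : Fin n, (p i) 0 ≠ 0 ∧ (p j) 0 ≠ 0 ∧ ¬ ∃ a : ℂ, p j = a • p i := by
  constructor
  · intro hfin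
    by_contra hcon
    push_neg at hcon
    have hq : ∃ q : Fin (d+1) → ℂ, q 0 = 1 ∧ ∀ j, p j 0 ≠ 0 → p j = (p j 0) • q := by
      by_cases hex : ∃ i, p i 0 ≠ 0
      · obtain ⟨i0, hi0⟩ := hex
        refine ⟨(p i0 0)⁻¹ • p i0, by simp [inv_mul_cancel₀ hi0], ?_⟩
        intro j hj
        obtain ⟨a, ha⟩ := hcon i0 j hi0 hj
        have ha0 : p j 0 = a * p i0 0 := by rw [ha]; rfl
        funext k
        have hak : p j k = a * p i0 k := by rw [ha]; rfl
        simp only [Pi.smul_apply, smul_eq_mul]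
        rw [hak, ha0]
        field_simp
      · push_neg at hex
        exact ⟨Pi.single 0 1, by simp, fun j hj => absurd (hex j) hj⟩
    obtain ⟨q, hq0, hqp⟩ := hq
    set f : ℕ → Matrix.SpecialLinearGroup (Fin (d+1)) ℂ := fun m =>
      ⟨famM d q ((m : ℂ) + 1), famM_det d q hq0 _ (Nat.cast_add_one_ne_zero m)⟩ with hf
    have hmem : ∀ m : ℕ, f m ∈
        { g : Matrix.SpecialLinearGroup (Fin (d + 1)) ℂ |
        (∀ v : Fin (d + 1) → ℂ, v 0 = 0 →
          ∃ c : ℂ, (g : Matrix (Fin (d + 1)) (Fin (d + 1)) ℂ).mulVec v = c • v) ∧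
        ∀ i : Fin n, ∃ c : ℂ,
          (g : Matrix (Fin (d + 1)) (Fin (d + 1)) ℂ).mulVec (p i) = c • (p i) } := by
      intro m
      set l : ℂ := (m : ℂ) + 1 with hl
      constructor
      · intro v hv
        refine ⟨l, ?_⟩
        rw [hf]
        rw [famM_mulVec]
        funext k
        simp [hv, hl]
      · intro i
        by_cases hi : p i 0 = 0
        · refine ⟨l, ?_⟩
          rw [hf, famM_mulVec]
          funext k
          simp [hi, hl]
        · refine ⟨l⁻¹ ^ d, ?_⟩
          rw [hf, famM_mulVec]
          funext k
          have hk : p i k = p i 0 * q k := by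
            have := congrFun (hqp i hi) k
            simpa using this
          simp only [Pi.smul_apply, smul_eq_mul]
          rw [hk]
          ring
    have hinj : Function.Injective f := by
      intro m m' hmm
      have h2 : famM d q ((m : ℂ) + 1) = famM d q ((m' : ℂ) + 1) := congrArg Subtype.val hmm
      have one_ne : (⟨1, by omega⟩ : Fin (d+1)) ≠ 0 := by
        simp [Fin.ext_iff]
      have h3 := congrFun (congrFun h2 ⟨1, by omega⟩) ⟨1, by omega⟩
      simp only [famM, Matrix.of_apply, if_pos rfl, if_neg one_ne, if_true, mul_one, mul_zero,
        add_zero] at h3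
      have : (m : ℂ) = m' := by linear_combination h3
      exact_mod_cast this
    exact (Set.infinite_of_injective_forall_mem hinj hmem) hfin
  · rintro ⟨i, j, hi, hj, hnp⟩
    have hT : ({c : ℂ | c ^ (d+1) = 1}).Finite := by
      apply Set.Finite.subset ((Polynomial.nthRoots (d+1) (1:ℂ)).toFinset.finite_toSet)
      intro c hc
      rw [Finset.mem_coe, Multiset.mem_toFinset, Polynomial.mem_nthRoots (by omega)]
      exact hc
    have hfin := hT.image (fun c =>
      if h : c ^ (d+1) = 1 then
        (⟨c • (1 : Matrix (Fin (d+1)) (Fin (d+1)) ℂ), by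
          rw [Matrix.det_smul, Matrix.det_one, mul_one, Fintype.card_fin]; exact h⟩ :
          Matrix.SpecialLinearGroup (Fin (d+1)) ℂ)
      else (1 : Matrix.SpecialLinearGroup (Fin (d+1)) ℂ))
    apply hfin.subset
    rintro g ⟨h1, h2⟩
    obtain ⟨a, ha⟩ := stab_scalar d g (p i) (p j) (hp i) (hp j) hi hj hnp h1 (h2 i) (h2 j)
    have haT : a ^ (d+1) = 1 := by
      have hdet := g.2
      rw [ha, Matrix.det_smul, Matrix.det_one, mul_one, Fintype.card_fin] at hdet
      exact hdet
    refine ⟨a, haT, ?_⟩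
    apply Subtype.ext
    simp only [dif_pos haT]
    exact (congrArg Subtype.val (dif_pos haT)).trans ha.symm
end

section
/- Fix d ≥ 1. For g ∈ SL(d+1, ℂ), the following are equivalent: (i) g fixes the hyperplane H pointwise; (ii) there exist λ ∈ ℂˣ and b : Fin d → ℂ such that for every x : Fin d → ℂ there exists c : ℂ with c ≠ 0 and g.mulVec (Matrix.vecCons 1 x) = c • Matrix.vecCons 1 (λ • x + b). Moreover, for every λ ∈ ℂˣ and b : Fin d → ℂ there exists g ∈ SL(d+1, ℂ) fixing H pointwise realizing this pair (λ, b). In other words, on the affine chart {v₀ ≠ 0} ≅ 𝔸^d, the group fixing H pointwise acts exactly as the group of invertible homothety-translations x ↦ λx + b. -/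
open Matrix

private lemma mulVec_cons_apply {d : ℕ} (M : Matrix (Fin (d+1)) (Fin (d+1)) ℂ)
    (a : ℂ) (x : Fin d → ℂ) (i : Fin (d+1)) :
    M.mulVec (vecCons a x) i = M i 0 * a + ∑ j : Fin d, M i j.succ * x j := by
  simp [Matrix.mulVec, dotProduct, Fin.sum_univ_succ]

-- forward direction as a lemma
private lemma fwd {d : ℕ} (hd : 1 ≤ d) (g : Matrix.SpecialLinearGroup (Fin (d + 1)) ℂ)
    (h : ∀ v : Fin (d + 1) → ℂ, v 0 = 0 →
          ∃ c : ℂ, (g : Matrix (Fin (d + 1)) (Fin (d + 1)) ℂ).mulVec v = c • v) :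
    ∃ (lam : ℂˣ) (b : Fin d → ℂ), ∀ x : Fin d → ℂ, ∃ c : ℂ, c ≠ 0 ∧
          (g : Matrix (Fin (d + 1)) (Fin (d + 1)) ℂ).mulVec (Matrix.vecCons 1 x) =
            c • Matrix.vecCons 1 ((lam : ℂ) • x + b) := by
  set M := (g : Matrix (Fin (d+1)) (Fin (d+1)) ℂ) with hM
  have hcol : ∀ j : Fin d, ∃ cj : ℂ, ∀ i, M i j.succ = cj * (Pi.single j.succ 1 : Fin (d+1) → ℂ) i := by
    intro j
    obtain ⟨cj, hcj⟩ := h (Pi.single j.succ 1)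
      (Pi.single_eq_of_ne (Fin.succ_ne_zero j).symm 1)
    refine ⟨cj, fun i => ?_⟩
    have := congrFun hcj i
    simpa [Matrix.mulVec_single] using this
  choose c hc using hcol
  set j0 : Fin d := ⟨0, hd⟩ with hj0
  have hceq : ∀ j, c j = c j0 := by
    intro j
    by_cases hj : j = j0
    · rw [hj]
    · have hsne : j.succ ≠ j0.succ := fun hcon => hj (Fin.succ_injective _ hcon)
      obtain ⟨e, he⟩ := h (Pi.single j.succ 1 + Pi.single j0.succ 1) (by
        simp [Pi.single_eq_of_ne (Fin.succ_ne_zero j).symm,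
          Pi.single_eq_of_ne (Fin.succ_ne_zero j0).symm])
      have hadd : M.mulVec (Pi.single j.succ 1 + Pi.single j0.succ 1)
          = M.mulVec (Pi.single j.succ 1) + M.mulVec (Pi.single j0.succ 1) :=
        Matrix.mulVec_add ..
      have hj' : ∀ i, M.mulVec (Pi.single j.succ 1) i = c j * (Pi.single j.succ 1 : Fin (d+1) → ℂ) i := by
        intro i; rw [Matrix.mulVec_single]; simpa using hc j i
      have hj0' : ∀ i, M.mulVec (Pi.single j0.succ 1) i = c j0 * (Pi.single j0.succ 1 : Fin (d+1) → ℂ) i := by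
        intro i; rw [Matrix.mulVec_single]; simpa using hc j0 i
      have e1 := congrFun he j.succ
      have e2 := congrFun he j0.succ
      rw [hadd] at e1 e2
      simp only [Pi.add_apply, hj', hj0', Pi.smul_apply, smul_eq_mul] at e1 e2
      rw [Pi.single_eq_of_ne hsne] at e1
      rw [Pi.single_eq_of_ne hsne.symm] at e2
      simp at e1 e2
      rw [e1, e2]
  set μ := c j0 with hμdef
  have hdet : M.det = 1 := g.prop
  have hμ : μ ≠ 0 := by
    intro h0
    have : M.det = 0 := Matrix.det_eq_zero_of_column_eq_zero j0.succ (fun i => by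
      rw [hc j0 i, ← hμdef, h0, zero_mul])
    rw [hdet] at this; exact one_ne_zero this
  set a := M 0 0 with hadef
  have ha : a ≠ 0 := by
    intro h0
    have : M.det = 0 := Matrix.det_eq_zero_of_row_eq_zero 0 (fun j => by
      rcases Fin.eq_zero_or_eq_succ j with rfl | ⟨k, rfl⟩
      · exact h0
      · rw [hc k 0, Pi.single_eq_of_ne (Fin.succ_ne_zero k).symm, mul_zero])
    rw [hdet] at this; exact one_ne_zero this
  refine ⟨Units.mk0 (μ * a⁻¹) (mul_ne_zero hμ (inv_ne_zero ha)),
    fun k => M k.succ 0 * a⁻¹, fun x => ⟨a, ha, ?_⟩⟩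
  funext i
  rw [mulVec_cons_apply]
  have hsum : ∀ i : Fin (d+1), ∑ j : Fin d, M i j.succ * x j
      = μ * (∑ j : Fin d, (Pi.single j.succ 1 : Fin (d+1) → ℂ) i * x j) := by
    intro i
    rw [Finset.mul_sum]
    refine Finset.sum_congr rfl fun j _ => ?_
    rw [hc j i, hceq j, mul_assoc]
  rcases Fin.eq_zero_or_eq_succ i with rfl | ⟨k, rfl⟩
  · rw [hsum]
    have : ∀ j : Fin d, (Pi.single j.succ 1 : Fin (d+1) → ℂ) 0 * x j = 0 := fun j => by
      rw [Pi.single_eq_of_ne (Fin.succ_ne_zero j).symm, zero_mul]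
    simp [this]
    exact hadef.symm
  · rw [hsum]
    have : ∀ j : Fin d, (Pi.single j.succ 1 : Fin (d+1) → ℂ) k.succ * x j
        = if j = k then x j else 0 := fun j => by
      rcases eq_or_ne j k with rfl | hj
      · simp
      · rw [Pi.single_eq_of_ne (fun hcon => hj (Fin.succ_injective _ hcon).symm) 1]
        simp [hj]
    rw [Finset.sum_congr rfl (fun j _ => this j), Finset.sum_ite_eq' Finset.univ k x]
    simp only [Finset.mem_univ, if_true, Pi.smul_apply, Matrix.cons_val_succ,
      Pi.add_apply, Pi.smul_apply, smul_eq_mul, Units.val_mk0]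
    field_simp
    ring

private lemma cons_sub_cons' {d : ℕ} (a b : ℂ) (x y : Fin d → ℂ) :
    vecCons a x - vecCons b y = vecCons (a - b) (x - y) := by
  funext i
  refine Fin.cases ?_ (fun k => ?_) i <;> simp

private lemma bwd {d : ℕ} (g : Matrix.SpecialLinearGroup (Fin (d + 1)) ℂ)
    (lam : ℂˣ) (b : Fin d → ℂ)
    (hg : ∀ x : Fin d → ℂ, ∃ c : ℂ, c ≠ 0 ∧
      (g : Matrix (Fin (d + 1)) (Fin (d + 1)) ℂ).mulVec (Matrix.vecCons 1 x) =
        c • Matrix.vecCons 1 ((lam : ℂ) • x + b)) :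
    ∀ v : Fin (d + 1) → ℂ, v 0 = 0 →
      ∃ c : ℂ, (g : Matrix (Fin (d + 1)) (Fin (d + 1)) ℂ).mulVec v = c • v := by
  intro v hv0
  set M := (g : Matrix (Fin (d+1)) (Fin (d+1)) ℂ)
  set x : Fin d → ℂ := Fin.tail v with hxdef
  have hv : v = vecCons 0 x := by
    funext i
    refine Fin.cases ?_ (fun k => ?_) i
    · simpa using hv0
    · simp [hxdef, Fin.tail]
  obtain ⟨c1, hc1ne, hc1⟩ := hg x
  obtain ⟨c0, hc0ne, hc0⟩ := hg 0
  obtain ⟨c2, hc2ne, hc2⟩ := hg (x + x)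
  set L := (lam : ℂ) with hL
  have hLne : L ≠ 0 := lam.ne_zero
  by_cases hx0 : x = 0
  · refine ⟨c0 * L, ?_⟩
    rw [hv, hx0]
    have : vecCons (0:ℂ) (0 : Fin d → ℂ) = (0 : Fin (d+1) → ℂ) := by
      funext i; refine Fin.cases ?_ (fun k => ?_) i <;> simp
    rw [this, Matrix.mulVec_zero, smul_zero]
  -- the two-scaling relation
  have key : vecCons (1:ℂ) (x + x) = (2:ℂ) • vecCons 1 x - vecCons 1 0 := by
    funext i
    refine Fin.cases ?_ (fun k => ?_) i <;> simp <;> ring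
  have hrel : c2 • vecCons (1:ℂ) (L • (x + x) + b)
      = (2:ℂ) • (c1 • vecCons (1:ℂ) (L • x + b)) - c0 • vecCons (1:ℂ) (L • 0 + b) := by
    rw [← hc2, ← hc1, ← hc0, key, Matrix.mulVec_sub, Matrix.mulVec_smul]
  have e0 := congrFun hrel 0
  simp only [Pi.smul_apply, Pi.sub_apply, Matrix.cons_val_zero, smul_eq_mul, mul_one] at e0
  -- e0 : c2 = 2 * c1 - c0
  have ek : ∀ k : Fin d, (c1 - c0) * x k = 0 := by
    intro k
    have e := congrFun hrel k.succ
    simp only [Pi.smul_apply, Pi.sub_apply, Matrix.cons_val_succ, Pi.add_apply,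
      smul_eq_mul, Pi.zero_apply, mul_zero, zero_add] at e
    -- e : c2 * (L * (x k + x k) + b k) = 2 * (c1 * (L * x k + b k)) - c0 * b k
    rw [e0] at e
    have : (2:ℂ) * L * ((c1 - c0) * x k) = 0 := by ring_nf; ring_nf at e; linear_combination e
    have h2 : (2:ℂ) * L ≠ 0 := mul_ne_zero two_ne_zero hLne
    exact (mul_eq_zero.mp this).resolve_left h2
  have hc1c0 : c1 = c0 := by
    obtain ⟨k, hk⟩ := Function.ne_iff.mp hx0
    have := ek k
    have hk' : x k ≠ 0 := by simpa using hk
    have := (mul_eq_zero.mp this).resolve_right hk'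
    exact sub_eq_zero.mp this
  refine ⟨c0 * L, ?_⟩
  have hsplit : vecCons (0:ℂ) x = vecCons 1 x - vecCons 1 0 := by
    rw [cons_sub_cons']; norm_num
  rw [hv, hsplit, Matrix.mulVec_sub, hc1, hc0, hc1c0]
  funext i
  refine Fin.cases ?_ (fun k => ?_) i <;>
    simp <;> ring

private def myMat (d : ℕ) (a μ : ℂ) (b : Fin d → ℂ) : Matrix (Fin (d+1)) (Fin (d+1)) ℂ :=
  Matrix.of fun i j => if j = 0 then vecCons a (fun k => a * b k) i else if i = j then μ else 0

private lemma myMat_det (d : ℕ) (a μ : ℂ) (b : Fin d → ℂ) :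
    (myMat d a μ b).det = a * μ ^ d := by
  rw [Matrix.det_succ_row_zero]
  rw [Finset.sum_eq_single 0]
  · have h00 : myMat d a μ b 0 0 = a := by simp [myMat]
    have hsub : (myMat d a μ b).submatrix Fin.succ (Fin.succAbove 0)
        = Matrix.diagonal (fun _ : Fin d => μ) := by
      ext i j
      simp [myMat, Matrix.submatrix, Fin.succAbove_zero, Fin.succ_ne_zero,
        Matrix.diagonal, Fin.succ_inj, eq_comm]
    rw [h00, hsub, Matrix.det_diagonal]
    simp
  · intro j _ hj
    have : myMat d a μ b 0 j = 0 := by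
      simp [myMat, hj, Ne.symm hj]
    rw [this]; ring
  · intro hmem; exact absurd (Finset.mem_univ 0) hmem

private lemma exist_part {d : ℕ} (hd : 1 ≤ d) (lam : ℂˣ) (b : Fin d → ℂ) :
      ∃ g : Matrix.SpecialLinearGroup (Fin (d + 1)) ℂ,
        (∀ v : Fin (d + 1) → ℂ, v 0 = 0 →
          ∃ c : ℂ, (g : Matrix (Fin (d + 1)) (Fin (d + 1)) ℂ).mulVec v = c • v) ∧
        ∀ x : Fin d → ℂ, ∃ c : ℂ, c ≠ 0 ∧
          (g : Matrix (Fin (d + 1)) (Fin (d + 1)) ℂ).mulVec (Matrix.vecCons 1 x) =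
            c • Matrix.vecCons 1 ((lam : ℂ) • x + b) := by
  obtain ⟨a, ha⟩ := IsAlgClosed.exists_pow_nat_eq (((lam : ℂ))⁻¹ ^ d) (Nat.succ_pos d)
  have haneq : a ≠ 0 := by
    intro h0
    rw [h0, zero_pow (Nat.succ_ne_zero d)] at ha
    exact (pow_ne_zero d (inv_ne_zero lam.ne_zero)) ha.symm
  set μ := (lam : ℂ) * a with hμ
  have hdet : (myMat d a μ b).det = 1 := by
    rw [myMat_det, hμ, mul_pow]
    have : a * ((lam:ℂ) ^ d * a ^ d) = (lam:ℂ) ^ d * a ^ (d + 1) := by ring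
    rw [this, ha, ← mul_pow, mul_inv_cancel₀ lam.ne_zero, one_pow]
  refine ⟨⟨myMat d a μ b, hdet⟩, ?_, ?_⟩
  · intro v hv0
    refine ⟨μ, ?_⟩
    funext i
    show ∑ j, myMat d a μ b i j * v j = μ * v i
    rw [Fin.sum_univ_succ]
    have h0 : myMat d a μ b i 0 * v 0 = 0 := by rw [hv0, mul_zero]
    rw [h0, zero_add]
    have hterm : ∀ j : Fin d, myMat d a μ b i j.succ * v j.succ
        = (if i = j.succ then μ else 0) * v j.succ := fun j => by
      simp [myMat, Fin.succ_ne_zero]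
    rw [Finset.sum_congr rfl fun j _ => hterm j]
    rcases Fin.eq_zero_or_eq_succ i with rfl | ⟨k, rfl⟩
    · rw [hv0, mul_zero]
      refine Finset.sum_eq_zero fun j _ => ?_
      rw [if_neg (Fin.succ_ne_zero j).symm, zero_mul]
    · have : ∀ j : Fin d, (if k.succ = j.succ then μ else 0) * v j.succ
          = if j = k then μ * v j.succ else 0 := fun j => by
        simp [Fin.succ_inj, eq_comm]
      rw [Finset.sum_congr rfl fun j _ => this j,
        Finset.sum_ite_eq' Finset.univ k fun j => μ * v j.succ]
      simp
  · intro x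
    refine ⟨a, haneq, ?_⟩
    funext i
    show ∑ j, myMat d a μ b i j * vecCons 1 x j = _
    rw [Fin.sum_univ_succ]
    rcases Fin.eq_zero_or_eq_succ i with rfl | ⟨k, rfl⟩
    · have : ∀ j : Fin d, myMat d a μ b 0 j.succ * vecCons 1 x j.succ = 0 := fun j => by
        simp [myMat, Fin.succ_ne_zero j, (Fin.succ_ne_zero j).symm]
      rw [Finset.sum_congr rfl fun j _ => this j]
      simp [myMat]
    · have hterm : ∀ j : Fin d, myMat d a μ b k.succ j.succ * vecCons 1 x j.succ
          = if j = k then μ * x j else 0 := fun j => by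
        simp [myMat, Fin.succ_ne_zero, Fin.succ_inj, eq_comm]
      rw [Finset.sum_congr rfl fun j _ => hterm j,
        Finset.sum_ite_eq' Finset.univ k fun j => μ * x j]
      simp [myMat, hμ]
      ring



/-- On the affine chart `{v₀ ≠ 0} ≅ 𝔸ᵈ`, the subgroup of `SL(d+1, ℂ)` fixing the
hyperplane `H = {v₀ = 0}` pointwise acts exactly as the group of invertible
homothety-translations `x ↦ λ x + b`: an element fixes `H` pointwise iff it acts
on the chart by some such map, and every pair `(λ, b)` is realized by some
element fixing `H` pointwise. -/
theorem fixesHyperplane_iff_affine_homothety (d : ℕ) (hd : 1 ≤ d) :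
    (∀ g : Matrix.SpecialLinearGroup (Fin (d + 1)) ℂ,
      (∀ v : Fin (d + 1) → ℂ, v 0 = 0 →
          ∃ c : ℂ, (g : Matrix (Fin (d + 1)) (Fin (d + 1)) ℂ).mulVec v = c • v) ↔
        ∃ (lam : ℂˣ) (b : Fin d → ℂ), ∀ x : Fin d → ℂ, ∃ c : ℂ, c ≠ 0 ∧
          (g : Matrix (Fin (d + 1)) (Fin (d + 1)) ℂ).mulVec (Matrix.vecCons 1 x) =
            c • Matrix.vecCons 1 ((lam : ℂ) • x + b)) ∧
    ∀ (lam : ℂˣ) (b : Fin d → ℂ),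
      ∃ g : Matrix.SpecialLinearGroup (Fin (d + 1)) ℂ,
        (∀ v : Fin (d + 1) → ℂ, v 0 = 0 →
          ∃ c : ℂ, (g : Matrix (Fin (d + 1)) (Fin (d + 1)) ℂ).mulVec v = c • v) ∧
        ∀ x : Fin d → ℂ, ∃ c : ℂ, c ≠ 0 ∧
          (g : Matrix (Fin (d + 1)) (Fin (d + 1)) ℂ).mulVec (Matrix.vecCons 1 x) =
            c • Matrix.vecCons 1 ((lam : ℂ) • x + b) := by
  refine ⟨fun g => ⟨fwd hd g, ?_⟩, fun lam b => exist_part hd lam b⟩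
  rintro ⟨lam, b, hg⟩
  exact bwd g lam b hg
end

section
/- Let T be a finite simple graph on a vertex type V that is a tree (connected and acyclic), let n ≥ 4, and let m : Fin n → V be a marking of the indices by vertices. For a set S of indices, say a vertex x lies in the hull of S if there exist a, b ∈ S such that x lies on the (unique) path in T from m a to m b. Suppose K and L are disjoint sets of indices with K ∪ L = Fin n, each of cardinality at least 2, and let i₀ ∈ L be a distinguished index. If there exists a vertex x₀ lying in both the hull of K and the hull of L, then there exist an index ℓ ∈ L with ℓ ≠ i₀, indices k₁, k₂ ∈ K with k₁ ≠ k₂, and a vertex x such that x lies on the path from m k₁ to m k₂ and x lies on the path from m ℓ to m i₀. -/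
/-- `x` lies on the (unique) path in `T` from `u` to `v`: there is a path from
`u` to `v` whose support contains `x`. -/
def liesOnPath {V : Type*} (T : SimpleGraph V) (u v x : V) : Prop :=
  ∃ p : T.Walk u v, p.IsPath ∧ x ∈ p.support

open SimpleGraph
open scoped Classical

lemma liesOnPath_rev {V : Type*} {T : SimpleGraph V} {u v x : V}
    (h : liesOnPath T u v x) : liesOnPath T v u x := by
  obtain ⟨p, hp, hx⟩ := h
  exact ⟨p.reverse, hp.reverse, by simpa using hx⟩

lemma liesOnPath_self {V : Type*} {T : SimpleGraph V} (hc : T.Connected) (u v : V) :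
    liesOnPath T u v u := by
  obtain ⟨w⟩ := hc u v
  exact ⟨w.toPath.1, w.toPath.2, Walk.start_mem_support _⟩

lemma liesOnPath_self' {V : Type*} {T : SimpleGraph V} (hc : T.Connected) (u v : V) :
    liesOnPath T u v v :=
  liesOnPath_rev (liesOnPath_self hc v u)

lemma eq_of_liesOnPath_self {V : Type*} {T : SimpleGraph V} {u x : V}
    (h : liesOnPath T u u x) : x = u := by
  obtain ⟨p, hp, hx⟩ := h
  rw [(Walk.isPath_iff_eq_nil (p := p)).mp hp] at hx
  simpa using hx

lemma mem_walk_of_liesOnPath {V : Type*} {T : SimpleGraph V} (hT : T.IsTree)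
    {u v x : V} (h : liesOnPath T u v x) (w : T.Walk u v) : x ∈ w.support := by
  obtain ⟨p, hp, hx⟩ := h
  have huniq := hT.existsUnique_path u v
  have heq : p = w.toPath.1 := huniq.unique hp w.toPath.2
  rw [heq] at hx
  exact Walk.support_bypass_subset w hx

lemma liesOnPath_trichotomy {V : Type*} {T : SimpleGraph V} (hT : T.IsTree)
    {c d e x : V} (h : liesOnPath T c d x) :
    liesOnPath T c e x ∨ liesOnPath T d e x := by
  obtain ⟨w1⟩ := hT.isConnected c e
  obtain ⟨w2⟩ := hT.isConnected e d
  have hx := mem_walk_of_liesOnPath hT h (w1.toPath.1.append w2.toPath.1)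
  rw [Walk.mem_support_append_iff] at hx
  rcases hx with h1 | h2
  · exact Or.inl ⟨w1.toPath.1, w1.toPath.2, h1⟩
  · exact Or.inr (liesOnPath_rev ⟨w2.toPath.1, w2.toPath.2, h2⟩)

/-- Key combinatorial lemma on dual trees of stable curves: if `T` is a finite
tree with a marking `m : Fin n → V`, `K ⊔ L = Fin n` is a partition into sets of
size at least `2` with a distinguished index `i₀ ∈ L`, and the hulls of `K` and
`L` share a vertex `x₀`, then there are `ℓ ∈ L \ {i₀}` and distinct `k₁, k₂ ∈ K`
such that the path from `m k₁` to `m k₂` meets the path from `m ℓ` to `m i₀`. -/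
theorem tree_hull_intersection {V : Type*} [Fintype V]
    (T : SimpleGraph V) (hT : T.IsTree)
    (n : ℕ) (hn : 4 ≤ n) (m : Fin n → V)
    (K L : Set (Fin n)) (hdisj : Disjoint K L) (hunion : K ∪ L = Set.univ)
    (hK : 2 ≤ K.ncard) (hL : 2 ≤ L.ncard)
    (i₀ : Fin n) (hi₀ : i₀ ∈ L)
    (x₀ : V)
    (hx₀K : ∃ a ∈ K, ∃ b ∈ K, liesOnPath T (m a) (m b) x₀)
    (hx₀L : ∃ a ∈ L, ∃ b ∈ L, liesOnPath T (m a) (m b) x₀) :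
    ∃ ℓ ∈ L, ℓ ≠ i₀ ∧ ∃ k₁ ∈ K, ∃ k₂ ∈ K, k₁ ≠ k₂ ∧ ∃ x : V,
      liesOnPath T (m k₁) (m k₂) x ∧ liesOnPath T (m ℓ) (m i₀) x := by
  have hc := hT.isConnected
  -- Part 1: distinct k₁, k₂ in K with x₀ on the path
  have hKpart : ∃ k₁ ∈ K, ∃ k₂ ∈ K, k₁ ≠ k₂ ∧ liesOnPath T (m k₁) (m k₂) x₀ := by
    obtain ⟨a, ha, b, hb, hab⟩ := hx₀K
    by_cases hne : a = b
    · subst hne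
      have hx : x₀ = m a := eq_of_liesOnPath_self hab
      obtain ⟨k₂, hk₂, hk₂ne⟩ := Set.exists_ne_of_one_lt_ncard (show 1 < K.ncard by omega) a
      exact ⟨a, ha, k₂, hk₂, fun h => hk₂ne h.symm, hx ▸ liesOnPath_self hc _ _⟩
    · exact ⟨a, ha, b, hb, hne, hab⟩
  -- Part 2: ℓ ∈ L, ℓ ≠ i₀ with x₀ on the path from m ℓ to m i₀
  have hLpart : ∃ ℓ ∈ L, ℓ ≠ i₀ ∧ liesOnPath T (m ℓ) (m i₀) x₀ := by
    obtain ⟨c, hcL, d, hdL, hcd⟩ := hx₀L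
    by_cases hne : c = d
    · subst hne
      have hx : x₀ = m c := eq_of_liesOnPath_self hcd
      by_cases hci : c = i₀
      · subst hci
        obtain ⟨ℓ, hℓ, hℓne⟩ := Set.exists_ne_of_one_lt_ncard (show 1 < L.ncard by omega) c
        exact ⟨ℓ, hℓ, hℓne, hx ▸ liesOnPath_self' hc _ _⟩
      · exact ⟨c, hcL, hci, hx ▸ liesOnPath_self hc _ _⟩
    · rcases liesOnPath_trichotomy hT (e := m i₀) hcd with h1 | h2
      · by_cases hci : c = i₀
        · subst hci
          exact ⟨d, hdL, fun h => hne h.symm, liesOnPath_rev hcd⟩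
        · exact ⟨c, hcL, hci, h1⟩
      · by_cases hdi : d = i₀
        · subst hdi
          exact ⟨c, hcL, hne, hcd⟩
        · exact ⟨d, hdL, hdi, h2⟩
  obtain ⟨ℓ, hℓ, hℓne, hℓpath⟩ := hLpart
  obtain ⟨k₁, hk₁, k₂, hk₂, hkne, hkpath⟩ := hKpart
  exact ⟨ℓ, hℓ, hℓne, k₁, hk₁, k₂, hk₂, hkne, x₀, hkpath, hℓpath⟩
end
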